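/- Let f, g be square-free monomials in m variables with f ⪯ g, and write f = f* · gcd(f,g), g = g* · gcd(f,g). Then f* ⪯ g*. -/

import Mathlib

/-- The partial order `⪯` on square-free monomials (identified with their sets of
variable indices): `S ⪯ T` iff there is a divisor `T'` of `T` of the same degree
as `S` whose increasingly-sorted index sequence dominates that of `S`
componentwise. -/
def preceq {m : ℕ} (S T : Finset (Fin m)) : Prop :=
  ∃ T' ⊆ T, T'.card = S.card ∧
    List.Forall₂ (· ≤ ·) (S.sort (· ≤ ·)) (T'.sort (· ≤ ·))

variable {m : ℕ}
open List

private def cnt (a : Fin m) (X : Finset (Fin m)) : ℕ :=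
  (X.filter (fun x => a ≤ x)).card

private lemma cnt_eq (a : Fin m) (X : Finset (Fin m)) :
    cnt a X = (X.sort (· ≤ ·)).countP (fun x => decide (a ≤ x)) := by
  rw [cnt, Finset.card, Finset.filter_val, ← Multiset.countP_eq_card_filter,
    ← Finset.sort_eq X (· ≤ ·), Multiset.coe_countP]

private lemma countP_le_of_forall₂ {l₁ l₂ : List (Fin m)} (a : Fin m)
    (h : List.Forall₂ (· ≤ ·) l₁ l₂) :
    l₁.countP (fun x => decide (a ≤ x)) ≤ l₂.countP (fun x => decide (a ≤ x)) := by
  induction h with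
  | nil => simp
  | @cons x y _ _ hxy _ ih =>
    by_cases hax : a ≤ x
    · have hay : a ≤ y := le_trans hax hxy
      simp [countP_cons, hax, hay]
      omega
    · simp [countP_cons, hax]
      omega

private lemma cnt_mono {X Y : Finset (Fin m)} (a : Fin m) (h : X ⊆ Y) :
    cnt a X ≤ cnt a Y :=
  Finset.card_le_card (Finset.filter_subset_filter _ h)

/-- Forward direction. -/
private lemma cnt_le_of_preceq {S T : Finset (Fin m)} (h : preceq S T) (a : Fin m) :
    cnt a S ≤ cnt a T := by
  obtain ⟨T', hT'T, hcard, hf⟩ := h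
  calc cnt a S ≤ cnt a T' := by
        rw [cnt_eq, cnt_eq]; exact countP_le_of_forall₂ a hf
    _ ≤ cnt a T := cnt_mono a hT'T

/-- Backward direction. -/
private lemma preceq_of_cnt_le {S T : Finset (Fin m)}
    (h : ∀ a, cnt a S ≤ cnt a T) : preceq S T := by
  rcases S.eq_empty_or_nonempty with rfl | hS
  · exact ⟨∅, Finset.empty_subset _, by simp, by simp⟩
  -- |S| ≤ |T|
  have hkn : S.card ≤ T.card := by
    have := h (S.min' hS)
    rw [cnt, cnt] at this
    have h1 : S.filter (fun x => S.min' hS ≤ x) = S :=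
      Finset.filter_true_of_mem fun x hx => S.min'_le x hx
    rw [h1] at this
    exact this.trans (Finset.card_le_card (Finset.filter_subset _ _))
  set lS := S.sort (· ≤ ·) with hlS
  set lT := T.sort (· ≤ ·) with hlT
  have hlSlen : lS.length = S.card := Finset.length_sort _
  have hlTlen : lT.length = T.card := Finset.length_sort _
  set l' := lT.drop (T.card - S.card) with hl'
  have hl'len : l'.length = S.card := by
    rw [hl', length_drop, hlTlen]; omega
  have hl'sub : l' <+ lT := drop_sublist _ _
  have hl'sorted : l'.Pairwise (· ≤ ·) := (T.pairwise_sort (· ≤ ·)).sublist hl'sub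
  have hl'nodup : l'.Nodup := (T.sort_nodup (· ≤ ·)).sublist hl'sub
  refine ⟨l'.toFinset, ?_, ?_, ?_⟩
  · intro x hx
    rw [mem_toFinset] at hx
    exact (Finset.mem_sort (· ≤ ·)).mp (hl'sub.mem hx)
  · rw [List.card_toFinset, hl'nodup.dedup, hl'len]
  · rw [(List.toFinset_sort (· ≤ ·) hl'nodup).mpr hl'sorted]
    apply forall₂_of_length_eq_of_get
    · rw [hlSlen, hl'len]
    intro i h₁ h₂
    -- key index estimate
    set a := lS.get ⟨i, h₁⟩ with ha
    by_contra hcon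
    push_neg at hcon
    -- count in S is ≥ S.card - i
    have hScnt : S.card - i ≤ cnt a S := by
      rw [cnt_eq, ← hlS]
      have hdrop : (lS.drop i).countP (fun x => decide (a ≤ x)) = (lS.drop i).length := by
        rw [List.countP_eq_length]
        intro x hx
        obtain ⟨j, hj, hjx⟩ := List.mem_iff_getElem.mp hx
        rw [List.getElem_drop] at hjx
        subst hjx
        simp only [decide_eq_true_eq, ha]
        have := (S.pairwise_sort (· ≤ ·)).rel_get_of_le
          (a := ⟨i, h₁⟩) (b := ⟨i + j, by rw [length_drop] at hj; show i + j < lS.length; omega⟩)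
          (Fin.mk_le_mk.mpr (Nat.le_add_right i j))
        simpa using this
      have := (drop_sublist i lS).countP_le (p := fun x => decide (a ≤ x))
      rw [hdrop] at this
      rw [length_drop, hlSlen] at this
      exact this
    -- count in T is ≤ S.card - i - 1
    have hTcnt : cnt a T ≤ S.card - i - 1 := by
      rw [cnt_eq, ← hlT]
      have hsplit := List.take_append_drop (T.card - S.card + i + 1) lT
      rw [← hsplit, countP_append]
      have htake : (lT.take (T.card - S.card + i + 1)).countP (fun x => decide (a ≤ x)) = 0 := by
        rw [List.countP_eq_zero]
        intro x hx
        obtain ⟨j, hj, hjx⟩ := List.mem_iff_getElem.mp hx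
        rw [List.getElem_take] at hjx
        subst hjx
        simp only [decide_eq_true_eq]
        intro hax
        rw [length_take] at hj
        have hjb : j ≤ T.card - S.card + i := by omega
        have h2 : lT.get ⟨j, by rw [hlTlen]; omega⟩ ≤ lT.get ⟨T.card - S.card + i, by rw [hlTlen]; omega⟩ :=
          (T.pairwise_sort (· ≤ ·)).rel_get_of_le (Fin.mk_le_mk.mpr hjb)
        have hlt : lT.get ⟨T.card - S.card + i, by rw [hlTlen]; omega⟩ < a := by
          have heq : l'.get ⟨i, h₂⟩ = lT.get ⟨T.card - S.card + i, by rw [hlTlen]; omega⟩ := by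
            simp [hl']
          exact heq ▸ hcon
        have h3 : lT[j]'(by rw [hlTlen]; omega) = lT.get ⟨j, by rw [hlTlen]; omega⟩ := rfl
        rw [h3] at hax
        exact absurd (hax.trans h2) (not_le.mpr hlt)
      rw [htake, Nat.zero_add]
      have := ((lT.drop (T.card - S.card + i + 1)).countP_le_length
        (p := fun x => decide (a ≤ x)))
      rw [length_drop, hlTlen] at this
      have h₁' : i < S.card := hlSlen ▸ h₁
      omega
    have := h a
    have h₁' : i < S.card := hlSlen ▸ h₁
    omega

/-- if `f ⪯ g` and `f = f*·gcd(f,g)`, `g = g*·gcd(f,g)`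
(i.e. `f* = f \ g`, `g* = g \ f` as index sets), then `f* ⪯ g*`. -/
theorem preceq_sdiff {m : ℕ} (S T : Finset (Fin m)) (h : preceq S T) :
    preceq (S \ T) (T \ S) := by
  apply preceq_of_cnt_le
  intro a
  have key := cnt_le_of_preceq h a
  have hS : cnt a (S \ T) + cnt a (S ∩ T) = cnt a S := by
    rw [cnt, cnt, cnt, ← Finset.card_union_of_disjoint, ← Finset.filter_union,
      Finset.sdiff_union_inter]
    exact Finset.disjoint_filter_filter (Finset.disjoint_sdiff_inter S T)
  have hT : cnt a (T \ S) + cnt a (T ∩ S) = cnt a T := by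
    rw [cnt, cnt, cnt, ← Finset.card_union_of_disjoint, ← Finset.filter_union,
      Finset.sdiff_union_inter]
    exact Finset.disjoint_filter_filter (Finset.disjoint_sdiff_inter T S)
  have hc : cnt a (S ∩ T) = cnt a (T ∩ S) := by rw [Finset.inter_comm]
  omega
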